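/- For any functions a, a', b, b' : Λ → {-1, 1} on a set Λ of hidden variables and any probability measure ρ on Λ, the integral of a(λ)b(λ) + a(λ)b'(λ) + a'(λ)b(λ) − a'(λ)b'(λ) with respect to ρ is at most 2. -/
import Mathlib

open MeasureTheory

/-- The CHSH inequality for deterministic local hidden variable models. -/
theorem stmt2 {Λ : Type} [MeasurableSpace Λ] (ρ : Measure Λ) [IsProbabilityMeasure ρ]
    (a a' b b' : Λ → ℝ)
    (ha : ∀ lam, a lam = 1 ∨ a lam = -1) (ha' : ∀ lam, a' lam = 1 ∨ a' lam = -1)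
    (hb : ∀ lam, b lam = 1 ∨ b lam = -1) (hb' : ∀ lam, b' lam = 1 ∨ b' lam = -1)
    (hma : Measurable a) (hma' : Measurable a')
    (hmb : Measurable b) (hmb' : Measurable b') :
    (∫ lam, (a lam * b lam + a lam * b' lam + a' lam * b lam - a' lam * b' lam) ∂ρ) ≤ 2 := by
  have hle : ∀ lam, a lam * b lam + a lam * b' lam + a' lam * b lam - a' lam * b' lam ≤ 2 := by
    intro lam
    rcases ha lam with h1 | h1 <;> rcases ha' lam with h2 | h2 <;>
      rcases hb lam with h3 | h3 <;> rcases hb' lam with h4 | h4 <;>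
      rw [h1, h2, h3, h4] <;> norm_num
  have hm : Measurable fun lam =>
      a lam * b lam + a lam * b' lam + a' lam * b lam - a' lam * b' lam := by
    measurability
  have hint : Integrable (fun lam =>
      a lam * b lam + a lam * b' lam + a' lam * b lam - a' lam * b' lam) ρ := by
    apply Integrable.mono' (g := fun _ => (4 : ℝ)) (integrable_const 4)
      hm.aestronglyMeasurable
    filter_upwards with lam
    rcases ha lam with h1 | h1 <;> rcases ha' lam with h2 | h2 <;>
      rcases hb lam with h3 | h3 <;> rcases hb' lam with h4 | h4 <;>
      rw [h1, h2, h3, h4] <;> norm_num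
  calc (∫ lam, (a lam * b lam + a lam * b' lam + a' lam * b lam - a' lam * b' lam) ∂ρ)
      ≤ ∫ _, (2 : ℝ) ∂ρ := integral_mono hint (integrable_const 2) hle
    _ = 2 := by simp
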